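/- Let G ∈ F_2^{k×(2^k−1)} be the generator matrix of the binary simplex code whose columns are all nonzero vectors of F_2^k. If the simplex code can serve every multiset of 2^{k−1} standard basis vectors (the 2^{k−1}-batch property with respect to a systematic generator matrix), then for any linearly independent vectors g_1,...,g_ℓ ∈ F_2^k and any positive integers t_1,...,t_ℓ with t_1+⋯+t_ℓ = 2^{k−1}, the matrix G can serve the multiset consisting of t_i copies of g_i for each i. -/

import Mathlib

open Matrix

/-- `G` serves the list of vectors `v` (indexed by `ι`) if there are pairwise disjoint
recovery sets `R i` of column indices with `v i` in the span of the columns indexed by `R i`. -/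
def Serves (F : Type*) [Field F] {m n ι : Type*} (G : Matrix m n F) (v : ι → (m → F)) : Prop :=
  ∃ R : ι → Set n, (Pairwise fun a b => Disjoint (R a) (R b)) ∧
    ∀ i, v i ∈ Submodule.span F ((fun j a => G a j) '' R i)

/-- the `t`-all-symbol PIR property. -/
def ASPIR (F : Type*) [Field F] {m n : Type*} (t : ℕ) (G : Matrix m n F) : Prop :=
  ∀ j : n, Serves F G fun _ : Fin t => fun a => G a j

/-- the `t`-all-symbol batch property. -/
def ASBatch (F : Type*) [Field F] {m n : Type*} (t : ℕ) (G : Matrix m n F) : Prop :=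
  ∀ c : Fin t → n, Serves F G fun i => fun a => G a (c i)

/-- generator matrix of the binary simplex code: columns are all nonzero vectors of `F_2^k`. -/
def simplexG (k : ℕ) : Matrix (Fin k) {v : Fin k → ZMod 2 // v ≠ 0} (ZMod 2) :=
  Matrix.of fun i v => v.1 i

lemma sumExtend_inl {K V ι : Type*} [Field K] [AddCommGroup V] [Module K V] {v : ι → V}
    (hs : LinearIndependent K v) (i : ι) : Module.Basis.sumExtend hs (Sum.inl i) = v i := by
  simp [Module.Basis.sumExtend, Module.Basis.reindex_apply, Equiv.Set.sumDiffSubset,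
    Module.Basis.extend_apply_self, Equiv.ofInjective, Equiv.Set.union,
    Equiv.Set.union', Equiv.ofLeftInverse, Equiv.sumCongr]
  rfl

lemma serves_comp {F : Type*} [Field F] {m n ι ι' : Type*} {G : Matrix m n F} {v : ι → (m → F)}
    (h : Serves F G v) (e : ι' → ι) (he : Function.Injective e) : Serves F G (v ∘ e) := by
  obtain ⟨R, hdisj, hspan⟩ := h
  exact ⟨R ∘ e, fun a b hab => hdisj (he.ne hab), fun i => hspan (e i)⟩

lemma serves_equiv {k : ℕ} {ι : Type*} {v : ι → (Fin k → ZMod 2)}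
    (f : (Fin k → ZMod 2) ≃ₗ[ZMod 2] (Fin k → ZMod 2))
    (h : Serves (ZMod 2) (simplexG k) v) :
    Serves (ZMod 2) (simplexG k) (fun i => f (v i)) := by
  obtain ⟨R, hdisj, hspan⟩ := h
  set π : {v : Fin k → ZMod 2 // v ≠ 0} → {v : Fin k → ZMod 2 // v ≠ 0} :=
    fun u => ⟨f u.1, fun h0 => u.2 (f.injective (by simp [h0]))⟩ with hπ
  have hπinj : Function.Injective π := by
    intro a b hab
    exact Subtype.ext (f.injective (congrArg Subtype.val hab))
  refine ⟨fun i => π '' R i, fun a b hab => (Set.disjoint_image_iff hπinj).2 (hdisj hab), ?_⟩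
  intro i
  have himg : (fun (j : {v : Fin k → ZMod 2 // v ≠ 0}) (a : Fin k) => simplexG k a j) '' (π '' R i)
      = ⇑f '' ((fun (j : {v : Fin k → ZMod 2 // v ≠ 0}) (a : Fin k) => simplexG k a j) '' R i) := by
    rw [← Set.image_comp, ← Set.image_comp]
    rfl
  have key := Submodule.apply_mem_span_image_of_mem_span
    (f : (Fin k → ZMod 2) →ₗ[ZMod 2] (Fin k → ZMod 2)) (hspan i)
  show f (v i) ∈ Submodule.span (ZMod 2)
    ((fun (j : {v : Fin k → ZMod 2 // v ≠ 0}) (a : Fin k) => simplexG k a j) '' (π '' R i))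
  rw [himg]
  exact key

theorem stmt19 {k : ℕ} (hk : 1 ≤ k)
    (hbatch : ∀ c : Fin (2 ^ (k - 1)) → Fin k,
      Serves (ZMod 2) (simplexG k) fun i => Pi.single (c i) 1) :
    ∀ (l : ℕ) (g : Fin l → (Fin k → ZMod 2)) (tt : Fin l → ℕ),
      LinearIndependent (ZMod 2) g → (∀ i, 0 < tt i) → (∑ i, tt i) = 2 ^ (k - 1) →
      Serves (ZMod 2) (simplexG k) fun p : (Σ i : Fin l, Fin (tt i)) => g p.1 := by
  intro l g tt hli htt hsum
  classical
  -- extend to a basis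
  set B := Module.Basis.sumExtend hli with hB
  haveI : Finite (Fin l ⊕ (Module.Basis.sumExtendIndex hli)) :=
    Module.Finite.finite_basis (R := ZMod 2) (M := Fin k → ZMod 2) B
  haveI : Finite (Module.Basis.sumExtendIndex hli) :=
    Finite.of_injective (Sum.inr : _ → Fin l ⊕ (Module.Basis.sumExtendIndex hli)) Sum.inr_injective
  haveI : Fintype (Module.Basis.sumExtendIndex hli) := Fintype.ofFinite _
  have hcard : l + Fintype.card (Module.Basis.sumExtendIndex hli) = k := by
    have := Module.finrank_eq_card_basis B
    rw [Module.finrank_fin_fun] at this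
    simpa [Fintype.card_sum] using this.symm
  have hl : l ≤ k := by omega
  have hκ : Fintype.card (Module.Basis.sumExtendIndex hli) = k - l := by omega
  set τ : (Fin l ⊕ (Module.Basis.sumExtendIndex hli)) ≃ Fin k :=
    ((Equiv.refl (Fin l)).sumCongr (Fintype.equivFinOfCardEq hκ)).trans
      (finSumFinEquiv.trans (finCongr (by omega))) with hτ
  have hτinl : ∀ i : Fin l, τ (Sum.inl i) = Fin.castLE hl i := by
    intro i; simp [hτ, Fin.ext_iff]
  set f := (Pi.basisFun (ZMod 2) (Fin k)).equiv (B.reindex τ) (Equiv.refl _) with hf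
  have hfapp : ∀ i : Fin l, f (Pi.single (Fin.castLE hl i) 1) = g i := by
    intro i
    have h1 : (Pi.single (Fin.castLE hl i) 1 : Fin k → ZMod 2)
        = Pi.basisFun (ZMod 2) (Fin k) (Fin.castLE hl i) := by simp
    rw [h1, hf, Module.Basis.equiv_apply, Equiv.refl_apply, Module.Basis.reindex_apply, ← hτinl,
      Equiv.symm_apply_apply, sumExtend_inl]
  -- index equivalence
  have hcardι : Fintype.card (Σ i : Fin l, Fin (tt i)) = 2 ^ (k - 1) := by
    simp [Fintype.card_sigma, hsum]
  set E : (Σ i : Fin l, Fin (tt i)) ≃ Fin (2 ^ (k - 1)) := Fintype.equivFinOfCardEq hcardι with hE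
  set c : Fin (2 ^ (k - 1)) → Fin k := fun j => Fin.castLE hl (E.symm j).1 with hc
  have h1 := serves_comp (serves_equiv f (hbatch c)) E E.injective
  have : (fun i => f (Pi.single (c i) 1)) ∘ E = fun p : (Σ i : Fin l, Fin (tt i)) => g p.1 := by
    funext p
    simp only [Function.comp_apply, hc, Equiv.symm_apply_apply]
    exact hfapp p.1
  rwa [this] at h1
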